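/- For even n ≥ 4, every edge of the cocktail party graph K_n minus a perfect matching has edge betweenness centrality 2 + 4/(n−2); hence this graph is edge-betweenness-uniform. -/

import Mathlib

open SimpleGraph Finset

/-- The number of shortest paths between `x` and `y` in `G`. -/
noncomputable def numShortestPaths {V : Type*} (G : SimpleGraph V) (x y : V) : ℕ :=
  Nat.card {p : G.Walk x y // p.length = G.dist x y}

/-- The number of shortest paths between `x` and `y` in `G` that contain the edge `e`. -/
noncomputable def numShortestPathsThru {V : Type*} (G : SimpleGraph V) (x y : V)
    (e : Sym2 V) : ℕ :=
  Nat.card {p : G.Walk x y // p.length = G.dist x y ∧ e ∈ p.edges}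

open Classical in
/-- The edge betweenness centrality of `e`: the sum over ordered pairs of distinct
vertices `(x, y)` of the fraction of shortest `x`-`y` paths containing `e`. -/
noncomputable def edgeBetweenness {V : Type*} [Fintype V] (G : SimpleGraph V)
    (e : Sym2 V) : ℚ :=
  ∑ x : V, ∑ y : V, if x = y then 0 else
    (numShortestPathsThru G x y e : ℚ) / (numShortestPaths G x y)

/-- The complete graph on `2 * m` vertices minus a perfect matching: vertices are
pairs `(a, i) : Fin m × Bool`, with `(a, i)` and `(b, j)` adjacent iff `a ≠ b`
(so the matched partner of `(a, i)` is `(a, !i)`). -/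
def cocktailPartyGraph (m : ℕ) : SimpleGraph (Fin m × Bool) where
  Adj p q := p.1 ≠ q.1
  symm := ⟨fun _ _ h => Ne.symm h⟩
  loopless := ⟨fun _ h => h rfl⟩

section Generic
variable {V : Type*} {G : SimpleGraph V} {x y : V}

lemma walk_length_one (p : G.Walk x y) (hp : p.length = 1) :
    ∃ h : G.Adj x y, p = Walk.cons h Walk.nil := by
  cases p with
  | nil => simp at hp
  | cons h q =>
    cases q with
    | nil => exact ⟨h, rfl⟩
    | cons h' q' => simp [Walk.length_cons] at hp

lemma walk_length_two (p : G.Walk x y) (hp : p.length = 2) :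
    ∃ (v : V) (h1 : G.Adj x v) (h2 : G.Adj v y),
      p = Walk.cons h1 (Walk.cons h2 Walk.nil) := by
  cases p with
  | nil => simp at hp
  | cons h q =>
    cases q with
    | nil => simp at hp
    | cons h' q' =>
      cases q' with
      | nil => exact ⟨_, h, h', rfl⟩
      | cons h'' q'' => simp [Walk.length_cons] at hp

lemma card_walk_one (h : G.Adj x y) : Nat.card {p : G.Walk x y // p.length = 1} = 1 := by
  rw [Nat.card_eq_one_iff_exists]
  refine ⟨⟨Walk.cons h Walk.nil, by simp⟩, ?_⟩
  rintro ⟨p, hp⟩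
  obtain ⟨h', rfl⟩ := walk_length_one p hp
  rfl

lemma card_walk_one_thru [DecidableEq V] (h : G.Adj x y) (e : Sym2 V) :
    Nat.card {p : G.Walk x y // p.length = 1 ∧ e ∈ p.edges} =
      if e = s(x, y) then 1 else 0 := by
  split_ifs with he
  · rw [Nat.card_eq_one_iff_exists]
    refine ⟨⟨Walk.cons h Walk.nil, by simp [he]⟩, ?_⟩
    rintro ⟨p, hp, hpe⟩
    obtain ⟨h', rfl⟩ := walk_length_one p hp
    rfl
  · have : IsEmpty {p : G.Walk x y // p.length = 1 ∧ e ∈ p.edges} := by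
      refine ⟨?_⟩
      rintro ⟨p, hp, hpe⟩
      obtain ⟨h', rfl⟩ := walk_length_one p hp
      simp at hpe
      exact he hpe
    simp [Nat.card_of_isEmpty]

lemma card_walk_two :
    Nat.card {p : G.Walk x y // p.length = 2} =
      Nat.card {v : V // G.Adj x v ∧ G.Adj v y} := by
  refine (Nat.card_congr (Equiv.ofBijective
    (fun v : {v : V // G.Adj x v ∧ G.Adj v y} =>
      (⟨Walk.cons v.2.1 (Walk.cons v.2.2 Walk.nil), by simp⟩ :
        {p : G.Walk x y // p.length = 2})) ⟨?_, ?_⟩)).symm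
  · rintro ⟨v1, _⟩ ⟨v2, _⟩ hab
    have := congrArg (fun q => q.1.support) hab
    simp at this
    exact Subtype.ext this
  · rintro ⟨p, hp⟩
    obtain ⟨v, h1, h2, rfl⟩ := walk_length_two p hp
    exact ⟨⟨v, h1, h2⟩, rfl⟩

lemma card_walk_two_thru (e : Sym2 V) :
    Nat.card {p : G.Walk x y // p.length = 2 ∧ e ∈ p.edges} =
      Nat.card {v : V // G.Adj x v ∧ G.Adj v y ∧ (e = s(x, v) ∨ e = s(v, y))} := by
  refine (Nat.card_congr (Equiv.ofBijective
    (fun v : {v : V // G.Adj x v ∧ G.Adj v y ∧ (e = s(x, v) ∨ e = s(v, y))} =>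
      (⟨Walk.cons v.2.1 (Walk.cons v.2.2.1 Walk.nil), by
        refine ⟨by simp, ?_⟩
        have := v.2.2.2
        simp only [Walk.edges_cons, Walk.edges_nil, List.mem_cons, List.mem_singleton]
        tauto⟩ :
        {p : G.Walk x y // p.length = 2 ∧ e ∈ p.edges})) ⟨?_, ?_⟩)).symm
  · rintro ⟨v1, _⟩ ⟨v2, _⟩ hab
    have := congrArg (fun q => q.1.support) hab
    simp at this
    exact Subtype.ext this
  · rintro ⟨p, hp, hpe⟩
    obtain ⟨v, h1, h2, rfl⟩ := walk_length_two p hp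
    refine ⟨⟨v, h1, h2, ?_⟩, rfl⟩
    simpa using hpe

end Generic

section CPGfacts
variable {m : ℕ}

lemma cpg_dist_adj {x y : Fin m × Bool} (h : x.1 ≠ y.1) :
    (cocktailPartyGraph m).dist x y = 1 :=
  SimpleGraph.dist_eq_one_iff_adj.mpr h

lemma cpg_dist_partner (hm : 2 ≤ m) {x y : Fin m × Bool} (h1 : x.1 = y.1) (h2 : x ≠ y) :
    (cocktailPartyGraph m).dist x y = 2 := by
  haveI : Nontrivial (Fin m) := Fin.nontrivial_iff_two_le.mpr hm
  obtain ⟨d, hd⟩ := exists_ne x.1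
  have ha1 : (cocktailPartyGraph m).Adj x (d, true) := fun hc => hd hc.symm
  have ha2 : (cocktailPartyGraph m).Adj (d, true) y := by
    intro hc; exact hd (by rw [← h1] at hc; exact hc)
  have hle : (cocktailPartyGraph m).dist x y ≤ 2 := by
    have := SimpleGraph.dist_le (Walk.cons ha1 (Walk.cons ha2 Walk.nil))
    simpa using this
  have hpos : 0 < (cocktailPartyGraph m).dist x y :=
    ((Walk.cons ha1 (Walk.cons ha2 Walk.nil)).reachable).pos_dist_of_ne h2
  have hne1 : (cocktailPartyGraph m).dist x y ≠ 1 := by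
    intro hc
    exact (SimpleGraph.dist_eq_one_iff_adj.mp hc) h1
  omega

lemma card_side {x y : Fin m × Bool} (h1 : x.1 = y.1) :
    Nat.card {v : Fin m × Bool // (cocktailPartyGraph m).Adj x v ∧
      (cocktailPartyGraph m).Adj v y} = 2 * m - 2 := by
  have e1 : {v : Fin m × Bool // (cocktailPartyGraph m).Adj x v ∧
      (cocktailPartyGraph m).Adj v y} ≃ {v : Fin m × Bool // ¬ (v.1 = x.1)} :=
    Equiv.subtypeEquivRight (by
      intro v
      constructor
      · rintro ⟨hA, _⟩ hc; exact hA hc.symm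
      · intro h; exact ⟨fun hc => h hc.symm, fun hc => h (hc.trans h1.symm)⟩)
  have e2 : {v : Fin m × Bool // ¬ (v.1 = x.1)} ≃ {d : Fin m // ¬ (d = x.1)} × Bool :=
    { toFun := fun v => (⟨v.1.1, v.2⟩, v.1.2)
      invFun := fun p => ⟨(p.1.1, p.2), p.1.2⟩
      left_inv := fun v => rfl
      right_inv := fun p => rfl }
  rw [Nat.card_congr (e1.trans e2), Nat.card_eq_fintype_card]
  rw [Fintype.card_prod, Fintype.card_subtype_compl, Fintype.card_subtype_eq]
  simp only [Fintype.card_fin, Fintype.card_bool]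
  omega

lemma card_mid (a b c : Fin m) (i0 j0 i : Bool) (hab : a ≠ b) :
    Nat.card {v : Fin m × Bool // (cocktailPartyGraph m).Adj (c, i) v ∧
      (cocktailPartyGraph m).Adj v (c, !i) ∧
      (s((a, i0), (b, j0)) = s(((c, i) : Fin m × Bool), v) ∨
       s((a, i0), (b, j0)) = s(v, ((c, !i) : Fin m × Bool)))} =
    if c = a ∨ c = b then 1 else 0 := by
  split_ifs with hc
  · rw [Nat.card_eq_one_iff_exists]
    rcases hc with rfl | rfl
    · -- c = a ; witness (b, j0)
      refine ⟨⟨(b, j0), fun h => hab h, fun h => hab h.symm, ?_⟩, ?_⟩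
      · rcases i with _ | _ <;> rcases i0 with _ | _ <;>
          simp_all [Sym2.eq_iff]
      · rintro ⟨v, h1, h2, h3 | h3⟩ <;> rw [Sym2.eq_iff] at h3 <;>
          rcases h3 with ⟨hA, hB⟩ | ⟨hA, hB⟩
        · exact Subtype.ext hB.symm
        · exact (hab (congrArg Prod.fst hB).symm).elim
        · exact (hab (congrArg Prod.fst hB).symm).elim
        · exact Subtype.ext hB.symm
    · -- c = b ; witness (a, i0)
      refine ⟨⟨(a, i0), fun h => hab h.symm, fun h => hab h, ?_⟩, ?_⟩
      · rcases i with _ | _ <;> rcases j0 with _ | _ <;>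
          simp_all [Sym2.eq_iff]
      · rintro ⟨v, h1, h2, h3 | h3⟩ <;> rw [Sym2.eq_iff] at h3 <;>
          rcases h3 with ⟨hA, hB⟩ | ⟨hA, hB⟩
        · exact (hab (congrArg Prod.fst hA)).elim
        · exact Subtype.ext hA.symm
        · exact Subtype.ext hA.symm
        · exact (hab (congrArg Prod.fst hA)).elim
  · push_neg at hc
    have he : IsEmpty {v : Fin m × Bool // (cocktailPartyGraph m).Adj (c, i) v ∧
      (cocktailPartyGraph m).Adj v (c, !i) ∧
      (s((a, i0), (b, j0)) = s(((c, i) : Fin m × Bool), v) ∨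
       s((a, i0), (b, j0)) = s(v, ((c, !i) : Fin m × Bool)))} := by
      refine ⟨?_⟩
      rintro ⟨v, h1, h2, h3 | h3⟩ <;> rw [Sym2.eq_iff] at h3 <;>
          rcases h3 with ⟨hA, hB⟩ | ⟨hA, hB⟩ <;>
        first
          | exact hc.1 (congrArg Prod.fst hA).symm
          | exact hc.2 (congrArg Prod.fst hA).symm
          | exact hc.1 (congrArg Prod.fst hB).symm
          | exact hc.2 (congrArg Prod.fst hB).symm
    exact @Nat.card_of_isEmpty _ he

lemma cpg_num_adj {x y : Fin m × Bool} (h : x.1 ≠ y.1) :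
    numShortestPaths (cocktailPartyGraph m) x y = 1 := by
  rw [numShortestPaths]
  simp only [cpg_dist_adj h]
  exact card_walk_one h

lemma cpg_thru_adj {x y : Fin m × Bool} (h : x.1 ≠ y.1) (e : Sym2 (Fin m × Bool)) :
    numShortestPathsThru (cocktailPartyGraph m) x y e = if e = s(x, y) then 1 else 0 := by
  rw [numShortestPathsThru]
  simp only [cpg_dist_adj h]
  exact card_walk_one_thru h e

lemma cpg_num_partner (hm : 2 ≤ m) {x y : Fin m × Bool} (h1 : x.1 = y.1) (h2 : x ≠ y) :
    numShortestPaths (cocktailPartyGraph m) x y = 2 * m - 2 := by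
  rw [numShortestPaths]
  simp only [cpg_dist_partner hm h1 h2]
  rw [card_walk_two]
  exact card_side h1

lemma cpg_thru_partner (hm : 2 ≤ m) (a b c : Fin m) (i0 j0 i : Bool) (hab : a ≠ b) :
    numShortestPathsThru (cocktailPartyGraph m) (c, i) (c, !i) s((a, i0), (b, j0)) =
      if c = a ∨ c = b then 1 else 0 := by
  have hne : ((c, i) : Fin m × Bool) ≠ (c, !i) := by simp
  rw [numShortestPathsThru]
  simp only [@cpg_dist_partner m hm (c, i) (c, !i) rfl hne]
  rw [card_walk_two_thru]
  exact card_mid a b c i0 j0 i hab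

lemma partner_eq {x y : Fin m × Bool} (h1 : x.1 = y.1) (h2 : x ≠ y) :
    y = (x.1, !x.2) := by
  obtain ⟨c, i⟩ := x
  obtain ⟨d, j⟩ := y
  simp only at h1
  subst h1
  rcases i with _ | _ <;> rcases j with _ | _ <;> simp_all

lemma key (hm : 2 ≤ m) (a b : Fin m) (i0 j0 : Bool) (hab : a ≠ b) (x y : Fin m × Bool) :
    (@ite ℚ (x = y) (Classical.propDecidable _) (0 : ℚ)
      ((numShortestPathsThru (cocktailPartyGraph m) x y s((a, i0), (b, j0)) : ℚ) /
        (numShortestPaths (cocktailPartyGraph m) x y))) =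
    (if s(x, y) = s(((a, i0) : Fin m × Bool), (b, j0)) then (1 : ℚ) else 0) +
    (if y = (x.1, !x.2) ∧ (x.1 = a ∨ x.1 = b) then 1 / (2 * (m : ℚ) - 2) else 0) := by
  by_cases hxy : x = y
  · subst hxy
    rw [if_pos rfl, if_neg, if_neg]
    · ring
    · rintro ⟨h, -⟩
      have := congrArg Prod.snd h
      simp at this
    · rw [Sym2.eq_iff]
      rintro (⟨h1, h2⟩ | ⟨h1, h2⟩)
      · exact hab (congrArg Prod.fst (h1.symm.trans h2))
      · exact hab (congrArg Prod.fst (h2.symm.trans h1))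
  · by_cases hfst : x.1 = y.1
    · have hy := partner_eq hfst hxy
      have hcond1 : ¬ (s(x, y) = s(((a, i0) : Fin m × Bool), (b, j0))) := by
        rw [Sym2.eq_iff]
        rintro (⟨h1, h2⟩ | ⟨h1, h2⟩)
        · exact hab ((congrArg Prod.fst h1).symm.trans (hfst.trans (congrArg Prod.fst h2)))
        · exact hab ((congrArg Prod.fst h2).symm.trans (hfst.symm.trans (congrArg Prod.fst h1)))
      rw [if_neg hxy, if_neg hcond1, zero_add]
      obtain ⟨c, i⟩ := x
      have hy' : y = (c, !i) := hy
      subst hy'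
      rw [@cpg_num_partner m hm (c, i) (c, !i) rfl hxy, cpg_thru_partner hm a b c i0 j0 i hab]
      have hcast : ((2 * m - 2 : ℕ) : ℚ) = 2 * (m : ℚ) - 2 := by
        have h2m : 2 ≤ 2 * m := by omega
        push_cast [Nat.cast_sub h2m]
        ring
      by_cases hc : c = a ∨ c = b
      · rw [if_pos hc, if_pos ⟨rfl, hc⟩, hcast]
        norm_num
      · rw [if_neg hc, if_neg (by rintro ⟨-, h⟩; exact hc h)]
        simp
    · rw [if_neg hxy, cpg_num_adj hfst, cpg_thru_adj hfst,
        if_neg (show ¬((y = (x.1, !x.2)) ∧ (x.1 = a ∨ x.1 = b)) from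
          fun h => hfst (by rw [h.1]))]
      by_cases he : s(x, y) = s(((a, i0) : Fin m × Bool), (b, j0))
      · rw [if_pos he.symm, if_pos he]
        norm_num
      · rw [if_neg (fun h => he h.symm), if_neg he]
        norm_num

lemma sum_pair_eq_one (u w : Fin m × Bool) :
    (∑ x : Fin m × Bool, ∑ y : Fin m × Bool, if x = u ∧ y = w then (1 : ℚ) else 0) = 1 := by
  have inner : ∀ x : Fin m × Bool,
      (∑ y : Fin m × Bool, if x = u ∧ y = w then (1 : ℚ) else 0) =
        if x = u then 1 else 0 := by
    intro x
    by_cases hx : x = u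
    · simp [hx, Finset.sum_ite_eq']
    · simp [hx]
  simp only [inner]
  simp [Finset.sum_ite_eq']

lemma cpg_main (hm : 2 ≤ m) (a b : Fin m) (i0 j0 : Bool) (hab : a ≠ b) :
    edgeBetweenness (cocktailPartyGraph m) s((a, i0), (b, j0)) =
      2 + 4 / ((2 * m : ℚ) - 2) := by
  classical
  have hMne : (2 * (m : ℚ) - 2) ≠ 0 := by
    have h2 : (2 : ℚ) ≤ (m : ℚ) := by exact_mod_cast hm
    nlinarith
  unfold edgeBetweenness
  rw [Finset.sum_congr rfl fun x _ => Finset.sum_congr rfl fun y _ =>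
    key hm a b i0 j0 hab x y]
  simp only [Finset.sum_add_distrib]
  have S1 : (∑ x : Fin m × Bool, ∑ y : Fin m × Bool,
      if s(x, y) = s(((a, i0) : Fin m × Bool), (b, j0)) then (1 : ℚ) else 0) = 2 := by
    have hsplit : ∀ x y : Fin m × Bool,
        (if s(x, y) = s(((a, i0) : Fin m × Bool), (b, j0)) then (1 : ℚ) else 0) =
        (if x = (a, i0) ∧ y = (b, j0) then (1 : ℚ) else 0) +
        (if x = (b, j0) ∧ y = (a, i0) then (1 : ℚ) else 0) := by
      intro x y
      by_cases hP : x = (a, i0) ∧ y = (b, j0) <;> by_cases hQ : x = (b, j0) ∧ y = (a, i0)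
      · exact absurd (congrArg Prod.fst (hP.1.symm.trans hQ.1)) hab
      · rw [if_pos (Sym2.eq_iff.mpr (Or.inl hP)), if_pos hP, if_neg hQ]; ring
      · rw [if_pos (Sym2.eq_iff.mpr (Or.inr hQ)), if_neg hP, if_pos hQ]; ring
      · rw [if_neg (fun h => by
            rcases Sym2.eq_iff.mp h with hh | hh
            · exact hP hh
            · exact hQ hh), if_neg hP, if_neg hQ]; ring
    simp only [hsplit, Finset.sum_add_distrib]
    rw [sum_pair_eq_one, sum_pair_eq_one]
    norm_num
  have S2 : (∑ x : Fin m × Bool, ∑ y : Fin m × Bool,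
      if y = (x.1, !x.2) ∧ (x.1 = a ∨ x.1 = b) then 1 / (2 * (m : ℚ) - 2) else 0) =
        4 / (2 * (m : ℚ) - 2) := by
    have inner : ∀ x : Fin m × Bool,
        (∑ y : Fin m × Bool,
          if y = (x.1, !x.2) ∧ (x.1 = a ∨ x.1 = b) then 1 / (2 * (m : ℚ) - 2) else 0) =
        if x.1 = a ∨ x.1 = b then 1 / (2 * (m : ℚ) - 2) else 0 := by
      intro x
      by_cases hx : x.1 = a ∨ x.1 = b
      · simp [hx, Finset.sum_ite_eq']
      · simp [hx]
    simp only [inner]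
    have hsplit : ∀ x : Fin m × Bool,
        (if x.1 = a ∨ x.1 = b then 1 / (2 * (m : ℚ) - 2) else 0) =
        (if x = (a, true) then 1 / (2 * (m : ℚ) - 2) else 0) +
        (if x = (a, false) then 1 / (2 * (m : ℚ) - 2) else 0) +
        ((if x = (b, true) then 1 / (2 * (m : ℚ) - 2) else 0) +
         (if x = (b, false) then 1 / (2 * (m : ℚ) - 2) else 0)) := by
      intro x
      obtain ⟨d, j⟩ := x
      rcases j with _ | _ <;> by_cases hda : d = a <;> by_cases hdb : d = b <;>
        simp_all [Prod.ext_iff]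
    simp only [hsplit, Finset.sum_add_distrib, Finset.sum_ite_eq', Finset.mem_univ, if_true]
    ring
  rw [S1, S2]

end CPGfacts

theorem stmt4 (m : ℕ) (hm : 2 ≤ m) :
    (∀ e ∈ (cocktailPartyGraph m).edgeSet,
      edgeBetweenness (cocktailPartyGraph m) e = 2 + 4 / ((2 * m : ℚ) - 2)) ∧
    (∀ e₁ ∈ (cocktailPartyGraph m).edgeSet, ∀ e₂ ∈ (cocktailPartyGraph m).edgeSet,
      edgeBetweenness (cocktailPartyGraph m) e₁ =
        edgeBetweenness (cocktailPartyGraph m) e₂) := by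
  have H : ∀ e ∈ (cocktailPartyGraph m).edgeSet,
      edgeBetweenness (cocktailPartyGraph m) e = 2 + 4 / ((2 * m : ℚ) - 2) := by
    intro e he
    induction e using Sym2.ind with
    | _ u w =>
      rw [SimpleGraph.mem_edgeSet] at he
      obtain ⟨a, i0⟩ := u
      obtain ⟨b, j0⟩ := w
      exact cpg_main hm a b i0 j0 he
  exact ⟨H, fun e₁ h₁ e₂ h₂ => by rw [H e₁ h₁, H e₂ h₂]⟩
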